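/- Let A and B be C*-algebras and f : A → 𝓜(B) a *-homomorphism which is relatively proper: there exists an approximate identity (I_n) for A such that ‖f(I_n)·ι(b) − ι(b)‖ → 0 and ‖ι(b)·f(I_n) − ι(b)‖ → 0 for every b ∈ B. Let Φ be a state on the unital C*-algebra 𝓜(B) whose restriction Φ ∘ ι to B has norm 1. Then Φ ∘ f is a state on A, i.e. Φ ∘ f is positive and ‖Φ ∘ f‖ = 1. -/

import Mathlib

open Filter Topology
open scoped ComplexOrder ENNReal NNReal MultiplierAlgebra

noncomputable section

/-- A *state* on a C⋆-algebra: a continuous linear functional into `ℂ` that is nonnegative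
on nonnegative elements and has norm `1`. -/
def IsState {E : Type*} [NormedAddCommGroup E] [NormedSpace ℂ E] [PartialOrder E]
    (φ : E →L[ℂ] ℂ) : Prop :=
  (∀ a : E, 0 ≤ a → 0 ≤ φ a) ∧ ‖φ‖ = 1

variable {A : Type*} [NonUnitalCStarAlgebra A] [PartialOrder A] [StarOrderedRing A]

/-- `L` is an extended seminorm on the self-adjoint part `A_sa` of `A`:
`L (t • b) = |t| * L b` for real `t`, and `L (b + b') ≤ L b + L b'`. -/
def IsESeminorm (L : selfAdjoint A → ℝ≥0∞) : Prop :=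
  (∀ (t : ℝ) (b : selfAdjoint A), L (t • b) = (‖t‖₊ : ℝ≥0∞) * L b) ∧
    ∀ b b' : selfAdjoint A, L (b + b') ≤ L b + L b'

/-- The spectral distance `d_L(φ, ψ) = sup { |φ b - ψ b| : b ∈ A_sa, L b ≤ 1 }`,
valued in `[0, ∞]`. -/
def dL (L : selfAdjoint A → ℝ≥0∞) (φ ψ : A → ℂ) : ℝ≥0∞ :=
  ⨆ b : {b : selfAdjoint A // L b ≤ 1}, (‖φ (b.1 : A) - ψ (b.1 : A)‖₊ : ℝ≥0∞)

/-- An approximate identity for `A`: a net `(I n)` with `0 ≤ I n`, `‖I n‖ ≤ 1`, and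
`‖I n * a - a‖ → 0`, `‖a * I n - a‖ → 0` for every `a : A`. -/
def IsApproxUnit {ι : Type*} [Preorder ι] (I : ι → A) : Prop :=
  (∀ n, 0 ≤ I n) ∧ (∀ n, ‖I n‖ ≤ 1) ∧
    ∀ a : A, Tendsto (fun n => ‖I n * a - a‖) atTop (𝓝 0) ∧
      Tendsto (fun n => ‖a * I n - a‖) atTop (𝓝 0)

/-- The canonical embedding `B → 𝓜(ℂ, B)` as a continuous linear map. -/
def iotaCLM (B : Type*) [NonUnitalCStarAlgebra B] : B →L[ℂ] 𝓜(ℂ, B) :=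
  LinearMap.mkContinuous
    { toFun := fun a => (a : 𝓜(ℂ, B))
      map_add' := fun x y => map_add (DoubleCentralizer.coeHom (𝕜 := ℂ) (A := B)) x y
      map_smul' := fun c x => map_smul (DoubleCentralizer.coeHom (𝕜 := ℂ) (A := B)) c x }
    1 (fun a => by
      rw [one_mul]
      calc ‖(a : 𝓜(ℂ, B))‖ = ‖(a : 𝓜(ℂ, B)).fst‖ := (DoubleCentralizer.norm_fst _).symm
        _ = ‖ContinuousLinearMap.mul ℂ B a‖ := by rw [DoubleCentralizer.coe_fst]
        _ ≤ ‖a‖ := ContinuousLinearMap.opNorm_mul_apply_le ℂ B a)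

/-- If `f : A → 𝓜(B)` is a relatively proper `*`-homomorphism and `Φ` is a state on
`𝓜(B)` whose restriction to `B` has norm `1`, then `Φ ∘ f` is a state on `A`. -/
theorem isState_comp_of_relativelyProper
    {B : Type*} [NonUnitalCStarAlgebra B] [PartialOrder B] [StarOrderedRing B]
    [PartialOrder 𝓜(ℂ, B)] [StarOrderedRing 𝓜(ℂ, B)]
    (f : A →⋆ₙₐ[ℂ] 𝓜(ℂ, B))
    {ι : Type*} [Preorder ι] [Nonempty ι] [IsDirected ι (· ≤ ·)]
    (I : ι → A) (hI : IsApproxUnit I)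
    (hf : ∀ b : B, Tendsto (fun n => ‖f (I n) * (b : 𝓜(ℂ, B)) - (b : 𝓜(ℂ, B))‖) atTop (𝓝 0) ∧
      Tendsto (fun n => ‖(b : 𝓜(ℂ, B)) * f (I n) - (b : 𝓜(ℂ, B))‖) atTop (𝓝 0))
    (Φ : 𝓜(ℂ, B) →L[ℂ] ℂ) (hΦ : IsState Φ)
    (hΦB : ‖Φ.comp (iotaCLM B)‖ = 1) :
    ∃ ρ : A →L[ℂ] ℂ, (∀ a : A, ρ a = Φ (f a)) ∧ IsState ρ := by
  obtain ⟨hΦpos, hΦnorm⟩ := hΦ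
  obtain ⟨hIpos, hInorm, hIlim⟩ := hI
  haveI : (atTop : Filter ι).NeBot := Filter.atTop_neBot_iff.mpr ⟨‹_›, ‹_›⟩
  -- the composite functional
  set ρ : A →L[ℂ] ℂ := LinearMap.mkContinuous
    { toFun := fun a => Φ (f a)
      map_add' := fun x y => by simp
      map_smul' := fun c x => by simp }
    1 (fun a => by
      calc ‖Φ (f a)‖ ≤ ‖Φ‖ * ‖f a‖ := Φ.le_opNorm _
        _ ≤ 1 * ‖a‖ := by
            rw [hΦnorm]
            exact mul_le_mul_of_nonneg_left (NonUnitalStarAlgHom.norm_apply_le f a)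
              zero_le_one) with hρdef
  have hρ_apply : ∀ a : A, ρ a = Φ (f a) := fun a => by rw [hρdef]; rfl
  -- positivity of `f`
  have hfpos : ∀ a : A, 0 ≤ a → 0 ≤ f a := by
    intro a ha
    have h1 : f a = star (f (CFC.sqrt a)) * f (CFC.sqrt a) := by
      rw [← map_star, (IsSelfAdjoint.of_nonneg (CFC.sqrt_nonneg a)).star_eq, ← map_mul,
        CFC.sqrt_mul_sqrt_self a ha]
    rw [h1]
    exact star_mul_self_nonneg _
  -- positivity of `ρ`
  have hρpos : ∀ a : A, 0 ≤ a → 0 ≤ ρ a := fun a ha => hΦpos _ (hfpos a ha)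
  -- `Φ` is real on selfadjoint elements
  have hreal : ∀ x : 𝓜(ℂ, B), IsSelfAdjoint x → (starRingEnd ℂ) (Φ x) = Φ x := by
    intro x hx
    have h1 : Φ x = Φ (x⁺) - Φ (x⁻) := by
      rw [← map_sub, CFC.posPart_sub_negPart x hx]
    have hp := hΦpos _ (CFC.posPart_nonneg x)
    have hn := hΦpos _ (CFC.negPart_nonneg x)
    rw [Complex.le_def] at hp hn
    rw [h1, map_sub]
    congr 1
    · exact Complex.conj_eq_iff_im.mpr (by simpa using hp.2.symm)
    · exact Complex.conj_eq_iff_im.mpr (by simpa using hn.2.symm)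
  -- `Φ` is hermitian
  have hconj : ∀ x : 𝓜(ℂ, B), Φ (star x) = (starRingEnd ℂ) (Φ x) := by
    intro x
    have h1 : (starRingEnd ℂ) (Φ x + Φ (star x)) = Φ x + Φ (star x) := by
      rw [← map_add]
      exact hreal _ (by rw [IsSelfAdjoint, star_add, star_star, add_comm])
    have h2 : (Complex.I * (Φ x - Φ (star x))).im = 0 := by
      have hsa : IsSelfAdjoint (Complex.I • (x - star x)) := by
        rw [IsSelfAdjoint, star_smul, star_sub, star_star, Complex.star_def, Complex.conj_I,
          neg_smul, smul_sub, smul_sub, neg_sub]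
      have := Complex.conj_eq_iff_im.mp (hreal _ hsa)
      rwa [map_smul, map_sub, smul_eq_mul] at this
    have h1' : (Φ x + Φ (star x)).im = 0 := by
      have := Complex.conj_eq_iff_im.mp h1
      exact this
    apply Complex.ext
    · have := h2
      simp only [Complex.mul_im, Complex.I_re, Complex.I_im, Complex.sub_re, Complex.sub_im,
        zero_mul, one_mul, add_zero, zero_add] at this
      simp only [Complex.conj_re]
      linarith
    · simp only [Complex.add_im] at h1'
      simp only [Complex.conj_im]
      linarith
  -- Cauchy-Schwarz for `Φ`
  letI core : PreInnerProductSpace.Core ℂ 𝓜(ℂ, B) :=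
    { inner := fun x y => Φ (star x * y)
      conj_inner_symm := fun x y => by
        show (starRingEnd ℂ) (Φ (star y * x)) = Φ (star x * y)
        rw [← hconj, star_mul, star_star]
      re_inner_nonneg := fun x => (RCLike.nonneg_iff.mp (hΦpos _ (star_mul_self_nonneg x))).1
      add_left := fun x y z => by simp [star_add, add_mul]
      smul_left := fun x y r => by
        simp [star_smul, smul_mul_assoc, Complex.star_def, smul_eq_mul] }
  have CS : ∀ x y : 𝓜(ℂ, B), ‖Φ (star x * y)‖ * ‖Φ (star y * x)‖ ≤
      RCLike.re (Φ (star x * x)) * RCLike.re (Φ (star y * y)) := fun x y =>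
    InnerProductSpace.Core.inner_mul_inner_self_le (𝕜 := ℂ) (F := 𝓜(ℂ, B)) x y
  -- upper bound for the norm
  have hρle : ‖ρ‖ ≤ 1 := LinearMap.mkContinuous_norm_le _ zero_le_one _
  -- lower bound: key claim
  have key : ∀ s : ℝ, 0 ≤ s → s < 1 → s ^ 2 ≤ ‖ρ‖ := by
    intro s hs0 hs1
    rw [← hΦB] at hs1
    obtain ⟨b, hb1, hsb⟩ := (Φ.comp (iotaCLM B)).exists_lt_apply_of_lt_opNorm hs1
    set b' : 𝓜(ℂ, B) := (b : 𝓜(ℂ, B)) with hb'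
    have hb'apply : (Φ.comp (iotaCLM B)) b = Φ b' := rfl
    have hb'norm : ‖b'‖ ≤ 1 := by
      have : ‖iotaCLM B b‖ ≤ ‖iotaCLM B‖ * ‖b‖ := (iotaCLM B).le_opNorm b
      have h2 : ‖iotaCLM B‖ ≤ 1 := LinearMap.mkContinuous_norm_le _ zero_le_one _
      calc ‖b'‖ = ‖iotaCLM B b‖ := rfl
        _ ≤ ‖iotaCLM B‖ * ‖b‖ := (iotaCLM B).le_opNorm b
        _ ≤ 1 * 1 := mul_le_mul h2 hb1.le (norm_nonneg _) zero_le_one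
        _ = 1 := one_mul 1
    -- the limit
    have hlim : Tendsto (fun n => Φ (f (I n) * b')) atTop (𝓝 (Φ b')) := by
      rw [tendsto_iff_norm_sub_tendsto_zero]
      refine squeeze_zero (fun n => norm_nonneg _) (fun n => ?_) (hf b).1
      rw [← map_sub]
      calc ‖Φ (f (I n) * b' - b')‖ ≤ ‖Φ‖ * ‖f (I n) * b' - b'‖ := Φ.le_opNorm _
        _ = ‖f (I n) * b' - b'‖ := by rw [hΦnorm, one_mul]
    have hnlim : Tendsto (fun n => ‖Φ (f (I n) * b')‖) atTop (𝓝 ‖Φ b'‖) := hlim.norm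
    rw [hb'apply] at hsb
    obtain ⟨n, hn⟩ := (hnlim.eventually (eventually_gt_nhds hsb)).exists
    -- now work with x := f (I n)
    set x : 𝓜(ℂ, B) := f (I n) with hx
    have hxpos : 0 ≤ x := hfpos _ (hIpos n)
    have hxsa : star x = x := (IsSelfAdjoint.of_nonneg hxpos).star_eq
    have hxnorm : ‖x‖ ≤ 1 :=
      le_trans (NonUnitalStarAlgHom.norm_apply_le f (I n)) (hInorm n)
    have hxle1 : x ≤ 1 := (CStarAlgebra.norm_le_one_iff_of_nonneg x hxpos).mp hxnorm
    have hxx : x * x ≤ x := by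
      have := CStarAlgebra.pow_antitone hxpos hxle1 (by norm_num : (1 : ℕ) ≤ 2)
      simp only [pow_one, pow_two] at this
      exact this
    -- re Φ (x * x) ≤ re Φ x
    have h5 : RCLike.re (Φ (x * x)) ≤ RCLike.re (Φ x) := by
      have h6 : 0 ≤ Φ (x - x * x) := hΦpos _ (by rwa [sub_nonneg])
      rw [map_sub] at h6
      have h7 := (RCLike.nonneg_iff.mp h6).1
      rw [map_sub] at h7
      linarith
    -- re Φ (star b' * b') ≤ 1
    have h8 : RCLike.re (Φ (star b' * b')) ≤ 1 := by
      calc RCLike.re (Φ (star b' * b')) ≤ ‖Φ (star b' * b')‖ := RCLike.re_le_norm _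
        _ ≤ ‖Φ‖ * ‖star b' * b'‖ := Φ.le_opNorm _
        _ = ‖star b' * b'‖ := by rw [hΦnorm, one_mul]
        _ ≤ ‖star b'‖ * ‖b'‖ := norm_mul_le _ _
        _ ≤ 1 * 1 := by
            rw [norm_star]
            exact mul_le_mul hb'norm hb'norm (norm_nonneg _) zero_le_one
        _ = 1 := one_mul 1
    have hre_nonneg : 0 ≤ RCLike.re (Φ (x * x)) := by
      have h0 : (0 : 𝓜(ℂ, B)) ≤ x * x := by
        nth_rewrite 1 [← hxsa]
        exact star_mul_self_nonneg x
      exact (RCLike.nonneg_iff.mp (hΦpos _ h0)).1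
    -- Cauchy-Schwarz chain
    have h9 : ‖Φ (x * b')‖ * ‖Φ (x * b')‖ ≤ RCLike.re (Φ (x * x)) := by
      have h10 := CS x b'
      rw [hxsa] at h10
      have h11 : ‖Φ (star b' * x)‖ = ‖Φ (x * b')‖ := by
        have : star b' * x = star (star x * b') := by rw [star_mul, star_star]
        rw [this, hconj, RCLike.norm_conj, hxsa]
      rw [h11] at h10
      calc ‖Φ (x * b')‖ * ‖Φ (x * b')‖
          ≤ RCLike.re (Φ (x * x)) * RCLike.re (Φ (star b' * b')) := h10
        _ ≤ RCLike.re (Φ (x * x)) * 1 := by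
            exact mul_le_mul_of_nonneg_left h8 hre_nonneg
        _ = RCLike.re (Φ (x * x)) := mul_one _
    have h12 : s ^ 2 ≤ RCLike.re (Φ x) := by
      have : s * s ≤ ‖Φ (x * b')‖ * ‖Φ (x * b')‖ :=
        mul_le_mul hn.le hn.le hs0 (norm_nonneg _)
      rw [pow_two]
      linarith
    calc s ^ 2 ≤ RCLike.re (Φ x) := h12
      _ ≤ ‖Φ x‖ := RCLike.re_le_norm _
      _ = ‖ρ (I n)‖ := by rw [hρ_apply]
      _ ≤ ‖ρ‖ * ‖I n‖ := ρ.le_opNorm _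
      _ ≤ ‖ρ‖ * 1 := mul_le_mul_of_nonneg_left (hInorm n) (norm_nonneg ρ)
      _ = ‖ρ‖ := mul_one _
  have hρge : 1 ≤ ‖ρ‖ := by
    refine le_of_forall_lt fun r hr => ?_
    rcases lt_or_ge r 0 with h | h
    · exact h.trans_le (norm_nonneg ρ)
    · have hr1 : Real.sqrt r < 1 := by
        rw [show (1 : ℝ) = Real.sqrt 1 by simp]
        exact Real.sqrt_lt_sqrt h hr
      obtain ⟨u, hu1, hu2⟩ := exists_between hr1
      have hu0 : 0 ≤ u := le_trans (Real.sqrt_nonneg r) hu1.le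
      have : r < u ^ 2 := by
        calc r = Real.sqrt r ^ 2 := (Real.sq_sqrt h).symm
          _ < u ^ 2 := by
              exact pow_lt_pow_left₀ hu1 (Real.sqrt_nonneg r) (by norm_num)
      exact this.trans_le (key u hu0 hu2)
  exact ⟨ρ, hρ_apply, hρpos, le_antisymm hρle hρge⟩
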